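/- Let τ > 0, σ > 1, h > 0, d ≥ 1, and let W be the principal branch of the Lambert W function. Then the integral over ξ ∈ ℝ^d of exp{ −((σ-1)/(2^{σ-1} τ σ))^{1/(σ-1)} · W(𝔯(2^τ/h, e+|ξ|))^{-1/(σ-1)} · (ln(e+|ξ|))^{σ/(σ-1)} } dξ is finite, where 𝔯(h',k) = (h')^{-(σ-1)/τ} · e^{(σ-1)/σ} · ((σ-1)/(τσ)) · ln k. -/
import Mathlib


open MeasureTheory

set_option maxHeartbeats 1000000

/-- for τ > 0, σ > 1, h > 0 and d ≥ 1, the function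
ξ ↦ exp{−((σ-1)/(2^{σ-1}τσ))^{1/(σ-1)} W(𝔯(2^τ/h, e+|ξ|))^{-1/(σ-1)}
(ln(e+|ξ|))^{σ/(σ-1)}} is integrable on ℝ^d, where
𝔯(h',k) = (h')^{-(σ-1)/τ} e^{(σ-1)/σ} ((σ-1)/(τσ)) ln k and W is the principal branch of
the Lambert W function. -/
theorem weight_integrable (d : ℕ) (hd : 1 ≤ d) (τ σ h : ℝ) (hτ : 0 < τ) (hσ : 1 < σ)
    (hh : 0 < h) (W : ℝ → ℝ) (hW_nonneg : ∀ x : ℝ, 0 ≤ x → 0 ≤ W x)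
    (hW : ∀ x : ℝ, 0 ≤ x → W x * Real.exp (W x) = x) :
    Integrable (fun ξ : EuclideanSpace ℝ (Fin d) =>
      Real.exp (-(((σ - 1) / (2 ^ (σ - 1) * τ * σ)) ^ (1 / (σ - 1)) *
        (W (((2 : ℝ) ^ τ / h) ^ (-((σ - 1) / τ)) * Real.exp ((σ - 1) / σ) *
            ((σ - 1) / (τ * σ)) * Real.log (Real.exp 1 + ‖ξ‖))) ^ (-(1 / (σ - 1))) *
        (Real.log (Real.exp 1 + ‖ξ‖)) ^ (σ / (σ - 1))))) := by
  have hσ0 : (0:ℝ) < σ := by linarith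
  set p : ℝ := σ - 1 with hpdef
  have hp : (0:ℝ) < p := by rw [hpdef]; linarith
  -- the constants
  set a : ℝ := ((2 : ℝ) ^ τ / h) ^ (-(p / τ)) * Real.exp (p / σ) * (p / (τ * σ)) with ha_def
  have ha : 0 < a := by
    apply mul_pos (mul_pos _ (Real.exp_pos _)) (div_pos hp (mul_pos hτ hσ0))
    exact Real.rpow_pos_of_pos (div_pos (Real.rpow_pos_of_pos two_pos τ) hh) _
  set c : ℝ := (p / (2 ^ p * τ * σ)) ^ (1 / p) with hc_def
  have hc : 0 < c :=
    Real.rpow_pos_of_pos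
      (div_pos hp (mul_pos (mul_pos (Real.rpow_pos_of_pos two_pos _) hτ) hσ0)) _
  -- basic facts about W
  have hWmono : ∀ x y : ℝ, 0 ≤ x → x ≤ y → W x ≤ W y := by
    intro x y hx hxy
    by_contra hlt
    push_neg at hlt
    have hy : 0 ≤ y := hx.trans hxy
    have h1 : W y * Real.exp (W y) < W x * Real.exp (W x) := by
      calc W y * Real.exp (W y) ≤ W y * Real.exp (W x) :=
            mul_le_mul_of_nonneg_left (Real.exp_le_exp.mpr hlt.le) (hW_nonneg y hy)
        _ < W x * Real.exp (W x) := mul_lt_mul_of_pos_right hlt (Real.exp_pos _)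
    rw [hW x hx, hW y hy] at h1
    exact absurd hxy (not_le.mpr h1)
  have hWpos : ∀ x : ℝ, 0 < x → 0 < W x := by
    intro x hx
    rcases (hW_nonneg x hx.le).lt_or_eq with h1 | h1
    · exact h1
    · exfalso
      have h2 := hW x hx.le
      rw [← h1, zero_mul] at h2
      linarith
  have hWle : ∀ x : ℝ, 0 < x → W x ≤ 1 + Real.log (1 + x) := by
    intro x hx
    have hlog : 0 ≤ Real.log (1 + x) := Real.log_nonneg (by linarith)
    by_cases h1 : W x ≤ 1
    · linarith
    · push_neg at h1
      have hex : Real.exp (W x) ≤ x := by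
        have h2 := hW x hx.le
        nlinarith [Real.exp_pos (W x)]
      have h3 : W x ≤ Real.log x := by
        rw [← Real.log_exp (W x)]
        exact Real.log_le_log (Real.exp_pos _) hex
      have h4 : Real.log x ≤ Real.log (1 + x) := Real.log_le_log hx (by linarith)
      linarith
  -- a monotone (hence measurable) modification of W
  set V : ℝ → ℝ := fun x => W (max x 0) with hV_def
  have hVmono : Monotone V := fun x y hxy =>
    hWmono _ _ (le_max_right _ _) (max_le_max hxy le_rfl)
  have hVmeas : Measurable V := hVmono.measurable
  -- more constants
  set B : ℝ := 3 * Real.sqrt (1 + a) with hB_def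
  have hB : 0 < B := by
    have : 0 < Real.sqrt (1 + a) := Real.sqrt_pos.mpr (by linarith)
    positivity
  set K : ℝ := ((d : ℝ) + 1) * B ^ (1 / p) / c with hK_def
  have hK : 0 < K := by
    apply div_pos _ hc
    have : (0:ℝ) < (d : ℝ) + 1 := by positivity
    exact mul_pos this (Real.rpow_pos_of_pos hB _)
  set R₀ : ℝ := max 1 (K ^ (2 * p)) with hR0_def
  have hR0 : 0 < R₀ := lt_of_lt_of_le one_pos (le_max_left _ _)
  -- the key pointwise bound
  have hmain : ∀ t : ℝ, 1 ≤ t →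
      ((d : ℝ) + 1) * t - ((d : ℝ) + 1) * R₀ ≤
        c * (W (a * t)) ^ (-(1 / p)) * t ^ (σ / p) := by
    intro t ht
    have ht0 : (0:ℝ) < t := by linarith
    have hat : 0 < a * t := mul_pos ha ht0
    have hWat : 0 < W (a * t) := hWpos _ hat
    have hE0 : 0 ≤ c * (W (a * t)) ^ (-(1 / p)) * t ^ (σ / p) := by positivity
    by_cases hcase : R₀ ≤ t
    · -- main region: the exponent dominates (d+1) t
      have step1 : W (a * t) ≤ B * Real.sqrt t := by
        have h1 : W (a * t) ≤ 1 + Real.log (1 + a * t) := hWle _ hat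
        have hs0 : (0:ℝ) < 1 + a * t := by linarith
        have hs : 0 < Real.sqrt (1 + a * t) := Real.sqrt_pos.mpr hs0
        have h2 : Real.log (1 + a * t) ≤ 2 * Real.sqrt (1 + a * t) - 2 := by
          have h5 := Real.log_le_sub_one_of_pos hs
          have h6 : Real.log (1 + a * t) = 2 * Real.log (Real.sqrt (1 + a * t)) := by
            rw [Real.log_sqrt hs0.le]; ring
          linarith
        have h3 : Real.sqrt (1 + a * t) ≤ Real.sqrt (1 + a) * Real.sqrt t := by
          rw [← Real.sqrt_mul (by linarith : (0:ℝ) ≤ 1 + a)]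
          exact Real.sqrt_le_sqrt (by nlinarith)
        have h7 : 0 ≤ Real.sqrt (1 + a) * Real.sqrt t :=
          mul_nonneg (Real.sqrt_nonneg _) (Real.sqrt_nonneg _)
        rw [hB_def]
        nlinarith
      have hexp_nonpos : -(1 / p) ≤ 0 := by
        rw [neg_nonpos]; positivity
      have step2 : (B * Real.sqrt t) ^ (-(1 / p)) ≤ (W (a * t)) ^ (-(1 / p)) :=
        Real.rpow_le_rpow_of_nonpos hWat step1 hexp_nonpos
      have step3 : (B * Real.sqrt t) ^ (-(1 / p)) =
          B ^ (-(1 / p)) * (Real.sqrt t) ^ (-(1 / p)) :=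
        Real.mul_rpow hB.le (Real.sqrt_nonneg _)
      have step4 : (Real.sqrt t) ^ (-(1 / p)) = t ^ (-(1 / (2 * p))) := by
        rw [Real.sqrt_eq_rpow, ← Real.rpow_mul ht0.le]
        congr 1
        field_simp
      have step5 : t ^ (-(1 / (2 * p))) * t ^ (σ / p) = t * t ^ (1 / (2 * p)) := by
        rw [← Real.rpow_add ht0]
        have hσp : σ = p + 1 := by rw [hpdef]; ring
        rw [show -(1 / (2 * p)) + σ / p = 1 + 1 / (2 * p) by
          rw [hσp]; field_simp; ring]
        rw [Real.rpow_add ht0, Real.rpow_one]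
      have hBB : B ^ (-(1 / p)) * B ^ (1 / p) = 1 := by
        rw [← Real.rpow_add hB]; simp
      have step8 : c * B ^ (-(1 / p)) * K = (d : ℝ) + 1 := by
        rw [hK_def]
        rw [div_eq_mul_inv]
        calc c * B ^ (-(1 / p)) * (((d : ℝ) + 1) * B ^ (1 / p) * c⁻¹)
            = ((d : ℝ) + 1) * (B ^ (-(1 / p)) * B ^ (1 / p)) * (c * c⁻¹) := by ring
          _ = (d : ℝ) + 1 := by
              rw [hBB, mul_inv_cancel₀ hc.ne', mul_one, mul_one]
      have step7 : K ≤ t ^ (1 / (2 * p)) := by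
        have h8 : K ^ (2 * p) ≤ t := le_trans (le_max_right _ _) hcase
        have h9 : (K ^ (2 * p)) ^ (1 / (2 * p)) ≤ t ^ (1 / (2 * p)) :=
          Real.rpow_le_rpow (by positivity) h8 (by positivity)
        rwa [← Real.rpow_mul hK.le, mul_one_div, div_self (by positivity : (2:ℝ) * p ≠ 0),
          Real.rpow_one] at h9
      have i1 : c * (B * Real.sqrt t) ^ (-(1 / p)) * t ^ (σ / p) ≤
          c * (W (a * t)) ^ (-(1 / p)) * t ^ (σ / p) :=
        mul_le_mul_of_nonneg_right (mul_le_mul_of_nonneg_left step2 hc.le)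
          (Real.rpow_nonneg ht0.le _)
      have i2 : c * (B * Real.sqrt t) ^ (-(1 / p)) * t ^ (σ / p) =
          (c * B ^ (-(1 / p)) * t ^ (1 / (2 * p))) * t := by
        rw [step3]
        calc c * (B ^ (-(1 / p)) * (Real.sqrt t) ^ (-(1 / p))) * t ^ (σ / p)
            = c * B ^ (-(1 / p)) * ((Real.sqrt t) ^ (-(1 / p)) * t ^ (σ / p)) := by ring
          _ = (c * B ^ (-(1 / p)) * t ^ (1 / (2 * p))) * t := by
              rw [step4, step5]; ring
      have i3 : ((d : ℝ) + 1) * t ≤ (c * B ^ (-(1 / p)) * t ^ (1 / (2 * p))) * t := by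
        apply mul_le_mul_of_nonneg_right _ ht0.le
        calc (d : ℝ) + 1 = c * B ^ (-(1 / p)) * K := step8.symm
          _ ≤ c * B ^ (-(1 / p)) * t ^ (1 / (2 * p)) := by
              apply mul_le_mul_of_nonneg_left step7
              positivity
      have hR0nonneg : 0 ≤ ((d : ℝ) + 1) * R₀ := by positivity
      linarith [i1, i2 ▸ i3]
    · -- small region: the right-hand side is nonnegative, the left-hand side negative
      push_neg at hcase
      have hd1 : (0:ℝ) < (d : ℝ) + 1 := by positivity
      nlinarith
  -- rewrite the integrand using the measurable modification V
  have hfeq : (fun ξ : EuclideanSpace ℝ (Fin d) =>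
      Real.exp (-(c * (W (a * Real.log (Real.exp 1 + ‖ξ‖))) ^ (-(1 / p)) *
        (Real.log (Real.exp 1 + ‖ξ‖)) ^ (σ / p)))) =
      (fun ξ : EuclideanSpace ℝ (Fin d) =>
      Real.exp (-(c * (V (a * Real.log (Real.exp 1 + ‖ξ‖))) ^ (-(1 / p)) *
        (Real.log (Real.exp 1 + ‖ξ‖)) ^ (σ / p)))) := by
    funext ξ
    have he : (0:ℝ) < Real.exp 1 + ‖ξ‖ := by positivity
    have ht1 : 1 ≤ Real.log (Real.exp 1 + ‖ξ‖) := by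
      rw [← Real.log_exp 1]
      exact Real.log_le_log (Real.exp_pos 1) (by simp [norm_nonneg])
    have hat : 0 ≤ a * Real.log (Real.exp 1 + ‖ξ‖) := by nlinarith [ha]
    simp only [hV_def, max_eq_left hat]
  rw [hfeq]
  -- the dominating function
  set M : ℝ := ((d : ℝ) + 1) * R₀ with hM_def
  have hfin : ((Module.finrank ℝ (EuclideanSpace ℝ (Fin d))) : ℝ) < (d : ℝ) + 1 := by
    rw [finrank_euclideanSpace_fin]
    linarith
  have hgint : Integrable (fun ξ : EuclideanSpace ℝ (Fin d) =>
      Real.exp M * (1 + ‖ξ‖) ^ (-((d : ℝ) + 1))) :=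
    (integrable_one_add_norm hfin).const_mul _
  apply hgint.mono'
  · -- measurability
    apply Measurable.aestronglyMeasurable
    have m1 : Measurable fun ξ : EuclideanSpace ℝ (Fin d) =>
        Real.log (Real.exp 1 + ‖ξ‖) :=
      Real.measurable_log.comp (continuous_const.add continuous_norm).measurable
    have m2 : Measurable fun ξ : EuclideanSpace ℝ (Fin d) =>
        V (a * Real.log (Real.exp 1 + ‖ξ‖)) :=
      hVmeas.comp (measurable_const.mul m1)
    have m3 : Measurable fun x : ℝ => x ^ (-(1 / p)) := by fun_prop
    have m4 : Measurable fun x : ℝ => x ^ (σ / p) := by fun_prop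
    exact (Real.measurable_exp.comp
      (((measurable_const.mul (m3.comp m2)).mul (m4.comp m1)).neg))
  · -- the pointwise bound
    refine Filter.Eventually.of_forall fun ξ => ?_
    have he : (0:ℝ) < Real.exp 1 + ‖ξ‖ := by positivity
    have ht1 : 1 ≤ Real.log (Real.exp 1 + ‖ξ‖) := by
      rw [← Real.log_exp 1]
      exact Real.log_le_log (Real.exp_pos 1) (by simp [norm_nonneg])
    set t : ℝ := Real.log (Real.exp 1 + ‖ξ‖) with ht_def
    have hat : 0 ≤ a * t := by nlinarith [ha]
    have hVW : V (a * t) = W (a * t) := by simp only [hV_def, max_eq_left hat]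
    have hkey := hmain t ht1
    rw [← hVW] at hkey
    have hnorm : ‖Real.exp (-(c * (V (a * t)) ^ (-(1 / p)) * t ^ (σ / p)))‖ =
        Real.exp (-(c * (V (a * t)) ^ (-(1 / p)) * t ^ (σ / p))) :=
      Real.norm_of_nonneg (Real.exp_pos _).le
    rw [hnorm]
    have hstep : Real.exp (-(c * (V (a * t)) ^ (-(1 / p)) * t ^ (σ / p))) ≤
        Real.exp (M - ((d : ℝ) + 1) * t) := by
      apply Real.exp_le_exp.mpr
      rw [hM_def]
      linarith
    refine hstep.trans ?_
    rw [sub_eq_add_neg, Real.exp_add]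
    apply mul_le_mul_of_nonneg_left _ (Real.exp_pos M).le
    have h1 : Real.exp (-(((d : ℝ) + 1) * t)) = (Real.exp 1 + ‖ξ‖) ^ (-((d : ℝ) + 1)) := by
      rw [Real.rpow_def_of_pos he, ht_def]
      ring_nf
    rw [h1]
    apply Real.rpow_le_rpow_of_nonpos (by positivity) _ (by linarith)
    have : (1:ℝ) ≤ Real.exp 1 := by
      have := Real.add_one_le_exp (1:ℝ); linarith
    linarith
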